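/- For n ≥ 5, the Connected-compelling chromatic number of the cycle C_n equals n − 1. -/

import Mathlib

open SimpleGraph

/-- A proper coloring of `G` with `k` colors. -/
def ProperColoring {V : Type*} {k : ℕ} (G : SimpleGraph V) (c : V → Fin k) : Prop :=
  ∀ ⦃u v : V⦄, G.Adj u v → c u ≠ c v

/-- `f` selects a rainbow committee of the coloring `c`: one vertex of each color. -/
def IsRainbow {V : Type*} {k : ℕ} (c : V → Fin k) (f : Fin k → V) : Prop :=
  ∀ i : Fin k, c (f i) = i

/-- The coloring `c` compels property `P`: every rainbow committee has property `P`. -/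
def Compels {V : Type*} {k : ℕ} (c : V → Fin k) (P : Set V → Prop) : Prop :=
  ∀ f : Fin k → V, IsRainbow c f → P (Set.range f)

/-- The `P`-compelling chromatic number of `G`: the least number of colors in a proper
coloring, using every color, in which every rainbow committee has property `P`. -/
noncomputable def compellingChromNum {V : Type*} (G : SimpleGraph V) (P : Set V → Prop) : ℕ :=
  sInf {k : ℕ | ∃ c : V → Fin k,
    ProperColoring G c ∧ Function.Surjective c ∧ Compels c P}

/-- Property `Connected`: the set induces a connected subgraph of `G`. -/
def InducesConnected {V : Type*} (G : SimpleGraph V) (S : Set V) : Prop :=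
  (G.induce S).Connected

/-- The Connected-compelling chromatic number. -/
noncomputable def connCompellingChromNum {V : Type*} (G : SimpleGraph V) : ℕ :=
  compellingChromNum G (InducesConnected G)



section Toolkit
open scoped Fin.NatCast Fin.CommRing
variable {n : ℕ} [NeZero n]

lemma offset_sub_offset (a : Fin n) {i j : ℕ} (hi : i < n) (hj : j < n) :
    ((a + (i : Fin n)) - (a + (j : Fin n))).val = if j ≤ i then i - j else n + i - j := by
  have h : (a + (i:Fin n)) - (a + (j:Fin n)) = (i:Fin n) - (j:Fin n) := by ring
  rw [h, Fin.sub_def]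
  simp only [Fin.val_cast_of_lt hi, Fin.val_cast_of_lt hj]
  rcases le_or_gt j i with hc | hc
  · rw [if_pos hc]
    have h2 : n - j + i = n + (i - j) := by omega
    rw [h2, Nat.add_mod_left, Nat.mod_eq_of_lt (by omega)]
  · rw [if_neg (by omega), Nat.mod_eq_of_lt (by omega)]; omega

lemma offset_val (a : Fin n) {i : ℕ} (hi : i < n) : ((a + (i : Fin n)) - a).val = i := by
  have := offset_sub_offset a hi (Nat.pos_of_ne_zero (NeZero.ne n))
  simpa using this

lemma eq_offset (a x : Fin n) : x = a + (((x - a).val : ℕ) : Fin n) := by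
  rw [Fin.cast_val_eq_self]; ring

lemma offset_inj {a : Fin n} {i j : ℕ} (hi : i < n) (hj : j < n)
    (h : a + (i : Fin n) = a + (j : Fin n)) : i = j := by
  have := offset_val a hi
  rw [h, offset_val a hj] at this; omega

/-- key step: adjacent vertices avoiding i,j are on the same side -/
lemma side_step {i j u v : Fin n} (hn2 : 2 ≤ n) (huv : (cycleGraph n).Adj u v)
    (hui : u ≠ i) (huj : u ≠ j) (hvi : v ≠ i) (hvj : v ≠ j) :
    ((u - i).val < (j - i).val ↔ (v - i).val < (j - i).val) := by
  suffices H : ∀ u v : Fin n, (v - u).val = 1 → v ≠ i → v ≠ j → u ≠ i → u ≠ j →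
      ((u - i).val < (j - i).val ↔ (v - i).val < (j - i).val) by
    rw [cycleGraph_adj'] at huv
    rcases huv with h | h
    · exact (H v u h hui huj hvi hvj).symm
    · exact H u v h hvi hvj hui huj
  intro u v h1 hvi hvj hui huj
  set du := (u - i).val with hdu
  set dv := (v - i).val with hdv
  set dj := (j - i).val with hdj
  have hu : u = i + (du : Fin n) := eq_offset i u
  have hv : v = i + (dv : Fin n) := eq_offset i v
  have hj' : j = i + (dj : Fin n) := eq_offset i j
  have hdun : du < n := (u - i).isLt
  have hdvn : dv < n := (v - i).isLt
  have hdjn : dj < n := (j - i).isLt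
  rw [hu, hv, offset_sub_offset i hdvn hdun] at h1
  have hvine : dv ≠ 0 := by
    intro h0
    apply hvi
    rw [hv, h0]; simp
  have hvjne : dv ≠ dj := by
    intro h0
    apply hvj
    rw [hv, hj', h0]
  split at h1 <;> omega

lemma walk_side {S : Set (Fin n)} {i j : Fin n} (hn2 : 2 ≤ n) (hi : i ∉ S) (hj : j ∉ S) :
    ∀ {x y : ↑S} (_ : ((cycleGraph n).induce S).Walk x y),
      ((↑x - i).val < (j - i).val ↔ ((y : Fin n) - i).val < (j - i).val) := by
  intro x y w
  induction w with
  | nil => exact Iff.rfl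
  | @cons a b c h w ih =>
    have hadj : (cycleGraph n).Adj ↑a ↑b := h
    have h1 := side_step (i := i) (j := j) hn2 hadj (fun e => hi (by rw [← e]; exact a.2))
      (fun e => hj (by rw [← e]; exact a.2))
      (fun e => hi (by rw [← e]; exact b.2)) (fun e => hj (by rw [← e]; exact b.2))
    exact h1.trans ih

lemma not_induces_connected {S : Set (Fin n)} {i j a b : Fin n} (hn2 : 2 ≤ n)
    (hi : i ∉ S) (hj : j ∉ S) (ha : a ∈ S) (hb : b ∈ S)
    (hsa : (a - i).val < (j - i).val) (hsb : ¬ (b - i).val < (j - i).val) :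
    ¬ ((cycleGraph n).induce S).Connected := by
  intro hconn
  obtain ⟨w⟩ := hconn.preconnected ⟨a, ha⟩ ⟨b, hb⟩
  exact hsb ((walk_side hn2 hi hj w).mp hsa)

/-- coordinate version -/
lemma not_induces_connected' {S : Set (Fin n)} (base : Fin n) {gi gj ea eb : ℕ}
    (hgi : gi < n) (hgj : gj < n) (hea : ea < n) (heb : eb < n)
    (h1 : base + (gi : Fin n) ∉ S) (h2 : base + (gj : Fin n) ∉ S)
    (h3 : base + (ea : Fin n) ∈ S) (h4 : base + (eb : Fin n) ∈ S)
    (hsa : (if gi ≤ ea then ea - gi else n + ea - gi) < (if gi ≤ gj then gj - gi else n + gj - gi))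
    (hsb : ¬ ((if gi ≤ eb then eb - gi else n + eb - gi) <
      (if gi ≤ gj then gj - gi else n + gj - gi))) :
    ¬ ((cycleGraph n).induce S).Connected := by
  have hn2 : 2 ≤ n := by
    rcases Nat.lt_or_ge n 2 with h | h
    · exfalso; interval_cases n
      · omega
      · apply h1; have : gi = ea := by omega
        subst this; exact h3
    · exact h
  refine not_induces_connected hn2 h1 h2 h3 h4 ?_ ?_
  · rwa [offset_sub_offset base hea hgi, offset_sub_offset base hgj hgi]
  · rwa [offset_sub_offset base heb hgi, offset_sub_offset base hgj hgi]

def arcSet (a : Fin n) (m : ℕ) : Set (Fin n) := {x | (x - a).val < m}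

lemma mem_arc_iff {a x : Fin n} {m : ℕ} : x ∈ arcSet a m ↔ (x - a).val < m := Iff.rfl

lemma cast_n_sub_one : ((n - 1 : ℕ) : Fin n) = -1 := by
  have h1 : 1 ≤ n := Nat.pos_of_ne_zero (NeZero.ne n)
  have h : ((n - 1 : ℕ) : Fin n) = ((n : ℕ) : Fin n) - ((1 : ℕ) : Fin n) := by
    rw [← Nat.cast_sub h1]
  rw [h]
  simp

lemma ncard_val_lt {m : ℕ} (hm : m ≤ n) : Set.ncard {x : Fin n | x.val < m} = m := by
  have e : {x : Fin n | x.val < m} ≃ Fin m :=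
    ⟨fun x => ⟨x.1.1, x.2⟩, fun y => ⟨⟨y.1, lt_of_lt_of_le y.2 hm⟩, y.2⟩,
      fun x => rfl, fun y => rfl⟩
  rw [← Nat.card_coe_set_eq, Nat.card_congr e, Nat.card_eq_fintype_card, Fintype.card_fin]

lemma arc_eq_image (a : Fin n) (m : ℕ) :
    arcSet a m = (fun x : Fin n => a + x) '' {x : Fin n | x.val < m} := by
  ext z
  constructor
  · intro hz
    exact ⟨z - a, hz, by ring⟩
  · rintro ⟨x, hx, rfl⟩
    show ((a + x) - a).val < m
    rwa [add_sub_cancel_left]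

lemma arc_ncard (a : Fin n) {m : ℕ} (hm : m ≤ n) : (arcSet a m).ncard = m := by
  rw [arc_eq_image, Set.ncard_image_of_injective _ (add_right_injective a), ncard_val_lt hm]

lemma connected_eq_arc {S : Set (Fin n)} {k : ℕ} (hk : 1 ≤ k) (hcard : S.ncard = k)
    {v : Fin n} (hv : v ∉ S) (hconn : ((cycleGraph n).induce S).Connected) :
    ∃ a, S = arcSet a k := by
  classical
  have hn1 : 1 ≤ n := Nat.pos_of_ne_zero (NeZero.ne n)
  have hSfin : S.Finite := S.toFinite
  have hSne : S.Nonempty := Set.nonempty_of_ncard_ne_zero (by omega)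
  have hkn : k < n := by
    have hsub : S ⊆ {v}ᶜ := fun x hx => by
      simp only [Set.mem_compl_iff, Set.mem_singleton_iff]
      rintro rfl; exact hv hx
    have h1 : S.ncard ≤ ({v}ᶜ : Set (Fin n)).ncard :=
      Set.ncard_le_ncard hsub (Set.toFinite _)
    have h2 : ({v}ᶜ : Set (Fin n)).ncard = n - 1 := by
      rw [Set.compl_eq_univ_diff, Set.ncard_diff (Set.subset_univ _), Set.ncard_univ,
        Set.ncard_singleton, Nat.card_eq_fintype_card, Fintype.card_fin]
    omega
  -- the vertex v in offset coordinates: v = (v+1) + (n-1)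
  have hvoff : v = (v + 1) + ((n - 1 : ℕ) : Fin n) := by
    rw [cast_n_sub_one]; ring
  -- members of S have dv < n - 1
  have hdvS : ∀ x ∈ S, (x - (v + 1)).val < n - 1 := by
    intro x hx
    have h1 : (x - (v+1)).val < n := (x - (v+1)).isLt
    rcases Nat.lt_or_ge (x - (v+1)).val (n-1) with h | h
    · exact h
    · exfalso
      have he : (x - (v+1)).val = n - 1 := by omega
      have : x = v := by
        rw [eq_offset (v+1) x, he, ← hvoff]
      exact hv (this ▸ hx)
  -- minimum of coordinates
  set D : Finset ℕ := Finset.image (fun x => (x - (v + 1)).val) hSfin.toFinset with hD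
  have hDne : D.Nonempty := by
    obtain ⟨x, hx⟩ := hSne
    exact ⟨_, Finset.mem_image_of_mem _ (hSfin.mem_toFinset.mpr hx)⟩
  set mn := D.min' hDne with hmn
  have hmnD : mn ∈ D := D.min'_mem hDne
  obtain ⟨x₀, hx₀S', hx₀⟩ := Finset.mem_image.mp hmnD
  have hx₀S : x₀ ∈ S := hSfin.mem_toFinset.mp hx₀S'
  set a : Fin n := (v + 1) + (mn : Fin n) with ha
  have hmn_lt : mn < n - 1 := hx₀ ▸ hdvS x₀ hx₀S
  have haS : a ∈ S := by
    have : x₀ = a := by rw [ha, ← hx₀]; exact eq_offset (v+1) x₀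
    exact this ▸ hx₀S
  have hminS : ∀ x ∈ S, mn ≤ (x - (v + 1)).val := fun x hx =>
    D.min'_le _ (Finset.mem_image_of_mem _ (hSfin.mem_toFinset.mpr hx))
  -- a + (n-1) ∉ S
  have ham1 : a + ((n - 1 : ℕ) : Fin n) ∉ S := by
    rcases Nat.eq_zero_or_pos mn with h0 | hpos
    · have : a + ((n - 1 : ℕ) : Fin n) = v := by
        rw [ha, h0, cast_n_sub_one]; push_cast; ring
      rw [this]; exact hv
    · intro hmem
      have he : a + ((n - 1 : ℕ) : Fin n) = (v + 1) + ((mn - 1 : ℕ) : Fin n) := by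
        rw [ha, cast_n_sub_one]
        have : ((mn : ℕ) : Fin n) = ((mn - 1 : ℕ) : Fin n) + 1 := by
          conv_lhs => rw [show mn = (mn - 1) + 1 by omega]
          push_cast; ring
        rw [this]; ring
      have := hminS _ hmem
      rw [he, offset_val _ (by omega)] at this
      omega
  -- every element of S is in arcSet a k
  have hmain : ∀ x ∈ S, (x - a).val < k := by
    intro x hx
    by_contra hke
    push_neg at hke
    set e := (x - a).val with hee
    have hen : e < n := (x - a).isLt
    have hxe : x = a + (e : Fin n) := eq_offset a x
    have hen2 : e ≤ n - 2 := by
      rcases Nat.lt_or_ge e (n-1) with h | h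
      · omega
      · exfalso
        have : e = n - 1 := by omega
        exact ham1 (by rw [← this, ← hxe]; exact hx)
    by_cases hgap : ∃ t, 0 < t ∧ t < e ∧ a + (t : Fin n) ∉ S
    · obtain ⟨t, ht0, hte, htS⟩ := hgap
      refine not_induces_connected' a (gi := t) (gj := n - 1) (ea := e) (eb := 0)
        (by omega) (by omega) hen (by omega) htS ham1 (hxe ▸ hx) (by simpa using haS) ?_ ?_ hconn
      · rw [if_pos (by omega), if_pos (by omega)]; omega
      · rw [if_neg (by omega), if_pos (by omega)]; omega
    · push_neg at hgap
      have hsubset : Finset.image (fun t : ℕ => a + (t : Fin n)) (Finset.range (e + 1))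
          ⊆ hSfin.toFinset := by
        intro z hz
        obtain ⟨t, ht, rfl⟩ := Finset.mem_image.mp hz
        rw [Finset.mem_range] at ht
        rw [hSfin.mem_toFinset]
        rcases Nat.eq_zero_or_pos t with rfl | ht0
        · simpa using haS
        · rcases Nat.lt_or_ge t e with hlt | hge
          · exact hgap t ht0 hlt
          · have : t = e := by omega
            rw [this, ← hxe]; exact hx
      have hcard2 : (Finset.image (fun t : ℕ => a + (t : Fin n)) (Finset.range (e + 1))).card
          = e + 1 := by
        rw [Finset.card_image_of_injOn, Finset.card_range]
        intro t1 h1 t2 h2 h12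
        rw [Finset.mem_coe, Finset.mem_range] at h1 h2
        exact offset_inj (by omega) (by omega) h12
      have := Finset.card_le_card hsubset
      rw [hcard2] at this
      have : hSfin.toFinset.card = k := by rw [Set.ncard_eq_toFinset_card' S] at hcard; simpa using hcard
      omega
  refine ⟨a, Set.eq_of_subset_of_ncard_le (fun x hx => hmain x hx) ?_ (Set.toFinite _)⟩
  rw [arc_ncard a (by omega), hcard]

lemma off_top_iff (v x : Fin n) : (x - (v + 1)).val = n - 1 ↔ x = v := by
  have hn1 : 1 ≤ n := Nat.pos_of_ne_zero (NeZero.ne n)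
  constructor
  · intro h
    have := eq_offset (v + 1) x
    rw [h, cast_n_sub_one] at this
    rw [this]; ring
  · intro hxv
    rw [hxv]
    have h : v - (v + 1) = ((n - 1 : ℕ) : Fin n) := by rw [cast_n_sub_one]; ring
    rw [h, Fin.val_cast_of_lt (by omega)]

lemma arc_induce_connected (a : Fin n) {m : ℕ} (hm : 1 ≤ m) :
    ((cycleGraph n).induce (arcSet a m)).Connected := by
  have hn1 : 1 ≤ n := Nat.pos_of_ne_zero (NeZero.ne n)
  have haS : a ∈ arcSet a m := by
    show (a - a).val < m
    rw [sub_self]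
    simp; omega
  have aux : ∀ t (ht : t < m) (htn : t < n),
      ((cycleGraph n).induce (arcSet a m)).Reachable
        ⟨a + (t : Fin n), by rw [mem_arc_iff, offset_val a htn]; exact ht⟩ ⟨a, haS⟩ := by
    intro t
    induction t with
    | zero =>
      intro _ _
      have he : (⟨a + ((0:ℕ) : Fin n), by rw [mem_arc_iff, offset_val a (by omega)]; omega⟩ :
          ↥(arcSet a m)) = ⟨a, haS⟩ := by ext; simp
      rw [he]
    | succ s ih =>
      intro ht htn
      have hadj : (cycleGraph n).Adj (a + ((s+1 : ℕ) : Fin n)) (a + (s : Fin n)) := by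
        rw [cycleGraph_adj']
        left
        rw [offset_sub_offset a htn (by omega), if_pos (by omega)]
        omega
      have hstep : ((cycleGraph n).induce (arcSet a m)).Adj
          ⟨a + ((s+1 : ℕ) : Fin n), by rw [mem_arc_iff, offset_val a htn]; exact ht⟩
          ⟨a + (s : Fin n), by rw [mem_arc_iff, offset_val a (by omega)]; omega⟩ := hadj
      exact hstep.reachable.trans (ih (by omega) (by omega))
  rw [connected_iff]
  constructor
  · intro x y
    have hx : x = ⟨a + (((x.1 - a).val : ℕ) : Fin n), by
        rw [mem_arc_iff, offset_val a (x.1 - a).isLt]; exact x.2⟩ := by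
      exact Subtype.ext (eq_offset a x.1)
    have hy : y = ⟨a + (((y.1 - a).val : ℕ) : Fin n), by
        rw [mem_arc_iff, offset_val a (y.1 - a).isLt]; exact y.2⟩ := by
      exact Subtype.ext (eq_offset a y.1)
    rw [hx, hy]
    exact (aux _ x.2 (x.1 - a).isLt).trans (aux _ y.2 (y.1 - a).isLt).symm
  · exact ⟨⟨a, haS⟩⟩
    

lemma compl_singleton_eq_arc (w : Fin n) : ({w}ᶜ : Set (Fin n)) = arcSet (w + 1) (n - 1) := by
  ext x
  rw [Set.mem_compl_iff, Set.mem_singleton_iff, mem_arc_iff]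
  have h1 := (x - (w + 1)).isLt
  have h2 := off_top_iff w x
  constructor
  · intro hx
    have : (x - (w+1)).val ≠ n - 1 := fun h => hx (h2.mp h)
    omega
  · intro h hx
    rw [← h2.mpr hx] at h
    omega

def ccCol (n : ℕ) (hn : 5 ≤ n) : Fin n → Fin (n - 1) :=
  fun x => if h : x.val < n - 1 then ⟨x.val, h⟩ else ⟨1, by omega⟩

lemma upper_mem (hn : 5 ≤ n) (hnn : n = n) :
    ∃ c : Fin n → Fin (n - 1), ProperColoring (cycleGraph n) c ∧ Function.Surjective c ∧
      Compels c (InducesConnected (cycleGraph n)) := by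
  refine ⟨ccCol n hn, ?_, ?_, ?_⟩
  · -- proper
    intro u v hadj heq
    rw [cycleGraph_adj'] at hadj
    have H : ∀ u v : Fin n, (v - u).val = 1 → ccCol n hn u = ccCol n hn v → False := by
      intro u v h1 heq
      have hv : v = u + ((1 : ℕ) : Fin n) := by
        have := eq_offset u v
        rwa [h1] at this
      have hval0 : v.val = (u.val + 1) % n := by
        rw [hv, Fin.add_def, Fin.val_cast_of_lt (by omega : (1:ℕ) < n)]
      have hun := u.isLt
      have hval : v.val = u.val + 1 ∨ (u.val = n - 1 ∧ v.val = 0) := by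
        rcases Nat.lt_or_ge (u.val + 1) n with hc | hc
        · left; rw [hval0, Nat.mod_eq_of_lt hc]
        · right
          have he : u.val + 1 = n := by omega
          constructor
          · omega
          · rw [hval0, he, Nat.mod_self]
      simp only [ccCol] at heq
      split_ifs at heq with h2 h3 h3 <;> rw [Fin.mk.injEq] at heq <;> omega
    rcases hadj with h | h
    · exact H v u h heq.symm
    · exact H u v h heq
  · -- surjective
    intro i
    refine ⟨⟨i.val, by omega⟩, ?_⟩
    simp only [ccCol, dif_pos (show i.val < n - 1 from i.isLt)]
  · -- compels
    intro f hf
    have hinj : Function.Injective f := fun i j h => by rw [← hf i, ← hf j, h]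
    have hr : (Set.range f).ncard = n - 1 := by
      rw [← Set.image_univ, Set.ncard_image_of_injective _ hinj, Set.ncard_univ,
        Nat.card_eq_fintype_card, Fintype.card_fin]
    have hc : ((Set.range f)ᶜ).ncard = 1 := by
      rw [Set.compl_eq_univ_diff, Set.ncard_diff (Set.subset_univ _), Set.ncard_univ,
        Nat.card_eq_fintype_card, Fintype.card_fin, hr]
      omega
    obtain ⟨w, hw⟩ := Set.ncard_eq_one.mp hc
    have hrange : Set.range f = {w}ᶜ := by rw [← compl_compl (Set.range f), hw]
    show InducesConnected _ _
    unfold InducesConnected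
    rw [hrange, compl_singleton_eq_arc]
    exact arc_induce_connected _ (by omega)

lemma lower_bound (hn : 5 ≤ n) {k : ℕ} (c : Fin n → Fin k)
    (hp : ProperColoring (cycleGraph n) c) (hs : Function.Surjective c)
    (hcomp : Compels c (InducesConnected (cycleGraph n))) : n - 1 ≤ k := by
  by_contra hklt
  push_neg at hklt
  have hkn2 : k ≤ n - 2 := by omega
  -- k ≥ 2
  have hadj01 : (cycleGraph n).Adj 1 0 := by
    rw [cycleGraph_adj']
    left
    rw [sub_zero]
    exact Fin.val_one' n ▸ Nat.mod_eq_of_lt (by omega)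
  have hk2 : 2 ≤ k := by
    match k, c with
    | 0, c => exact (c 0).elim0
    | 1, c => exact absurd (Subsingleton.elim (c 1) (c 0)) (hp hadj01)
    | (m+2), c => omega
  -- base committee
  choose g hg using hs
  have hginj : Function.Injective g := fun i j h => by rw [← hg i, ← hg j, h]
  have hgcard : (Set.range g).ncard = k := by
    rw [← Set.image_univ, Set.ncard_image_of_injective _ hginj, Set.ncard_univ,
      Nat.card_eq_fintype_card, Fintype.card_fin]
  have hmiss : ∃ v, v ∉ Set.range g := by
    by_contra h
    push_neg at h
    have : Set.range g = Set.univ := Set.eq_univ_of_forall h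
    rw [this, Set.ncard_univ, Nat.card_eq_fintype_card, Fintype.card_fin] at hgcard
    omega
  obtain ⟨v, hv⟩ := hmiss
  obtain ⟨a, hA⟩ := connected_eq_arc (by omega) hgcard hv (hcomp g hg)
  -- coordinates facts
  have hmemA : ∀ t, t < k → a + (t : Fin n) ∈ Set.range g := by
    intro t ht
    rw [hA, mem_arc_iff, offset_val a (by omega)]
    exact ht
  have hnotA : ∀ x, x ∈ Set.range g → (x - a).val < k := fun x hx => by
    rw [hA] at hx; exact hx
  have hgc : ∀ x ∈ Set.range g, g (c x) = x := by
    rintro x ⟨i, rfl⟩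
    rw [hg]
  -- the swap lemma
  have hswap : ∀ u' : Fin n, u' ∉ Set.range g →
      ((g (c u') = a ∧ (u' - a).val = k) ∨
       (g (c u') = a + ((k - 1 : ℕ) : Fin n) ∧ (u' - a).val = n - 1)) := by
    intro u' hu'
    set p := (g (c u') - a).val with hpdef
    set q := (u' - a).val with hqdef
    have hpk : p < k := hnotA _ ⟨c u', rfl⟩
    have hqk : k ≤ q := by
      rw [hA, mem_arc_iff] at hu'
      omega
    have hqn : q ≤ n - 1 := by have := (u' - a).isLt; omega
    have hgp : g (c u') = a + (p : Fin n) := eq_offset a _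
    have hup : u' = a + (q : Fin n) := eq_offset a _
    set g' := Function.update g (c u') u' with hg'def
    have hrb : IsRainbow c g' := by
      intro i
      by_cases hi : i = c u'
      · rw [hi, hg'def, Function.update_self]
      · rw [hg'def, Function.update_of_ne hi, hg]
    have hconn' := hcomp g' hrb
    -- membership facts
    have m1 : u' ∈ Set.range g' := ⟨c u', Function.update_self _ _ _⟩
    have m2 : ∀ t, t < k → t ≠ p → a + (t : Fin n) ∈ Set.range g' := by
      intro t ht htp
      obtain ⟨i, hi⟩ := hmemA t ht
      refine ⟨i, ?_⟩
      have hine : i ≠ c u' := by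
        intro he
        rw [he, hgp] at hi
        exact htp (offset_inj (by omega) (by omega) hi.symm).symm.symm
      rw [hg'def, Function.update_of_ne hine, hi]
    have m3 : ∀ z : Fin n, z ≠ u' → (z ∉ Set.range g ∨ z = g (c u')) → z ∉ Set.range g' := by
      rintro z hz1 hz2 ⟨i, hi⟩
      by_cases hic : i = c u'
      · rw [hic, hg'def, Function.update_self] at hi
        exact hz1 hi.symm
      · rw [hg'def, Function.update_of_ne hic] at hi
        rcases hz2 with h | h
        · exact h ⟨i, hi⟩
        · apply hic
          rw [← hg i, hi, h, hg]
      -- p is an endpoint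
    have hzne : ∀ t s : ℕ, t < n → s < n → t ≠ s → a + (t : Fin n) ≠ a + (s : Fin n) := by
      intro t s ht hs hts he
      exact hts (offset_inj ht hs he)
    have hcupne : g (c u') ≠ u' := by
      rw [hgp, hup]
      exact hzne p q (by omega) (by omega) (by omega)
    have hpe : p = 0 ∨ p = k - 1 := by
      by_contra hpc
      push_neg at hpc
      have hp1 : 1 ≤ p := by omega
      have hp2 : p ≤ k - 2 := by omega
      set G : ℕ := if q = n - 1 then k else n - 1 with hGdef
      have hGk : k ≤ G := by rw [hGdef]; split <;> omega
      have hGn : G < n := by rw [hGdef]; split <;> omega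
      have hGq : G ≠ q := by rw [hGdef]; split <;> omega
      refine absurd hconn' (not_induces_connected' a (gi := p) (gj := G) (ea := p + 1)
        (eb := p - 1) (by omega) (by omega) (by omega) (by omega) ?_ ?_ ?_ ?_ ?_ ?_)
      · rw [← hgp]
        exact m3 _ hcupne (Or.inr rfl)
      · refine m3 _ (by rw [hup]; exact hzne G q (by omega) (by omega) hGq) (Or.inl ?_)
        rw [hA, mem_arc_iff, offset_val a (by omega)]
        omega
      · exact m2 (p + 1) (by omega) (by omega)
      · exact m2 (p - 1) (by omega) (by omega)
      · rw [if_pos (by omega), if_pos (by omega)]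
        omega
      · rw [if_neg (by omega), if_pos (by omega)]
        omega
    rcases hpe with hp0 | hpk1
    · -- p = 0 : show q = k
      left
      have hqe : q = k ∨ q = n - 1 := by
        by_contra hqc
        push_neg at hqc
        have hq1 : k + 1 ≤ q := by omega
        have hq2 : q ≤ n - 2 := by omega
        refine absurd hconn' (not_induces_connected' a (gi := 0) (gj := q - 1) (ea := 1)
          (eb := q) (by omega) (by omega) (by omega) (by omega) ?_ ?_ ?_ ?_ ?_ ?_)
        · have : a + ((0 : ℕ) : Fin n) = g (c u') := by
            rw [hgp, hp0]
          rw [this]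
          exact m3 _ hcupne (Or.inr rfl)
        · refine m3 _ (by rw [hup]; exact hzne (q-1) q (by omega) (by omega) (by omega))
            (Or.inl ?_)
          rw [hA, mem_arc_iff, offset_val a (by omega)]
          omega
        · exact m2 1 (by omega) (by omega)
        · rw [← hup]; exact m1
        · rw [if_pos (by omega), if_pos (by omega)]
          omega
        · rw [if_pos (by omega), if_pos (by omega)]
          omega
      rcases hqe with h | h
      · exact ⟨by rw [hgp, hp0]; simp, h⟩
      · exfalso
        -- u' = a - 1 adjacent to a = g (c u'), same colour
        have hadj : (cycleGraph n).Adj (g (c u')) u' := by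
          rw [cycleGraph_adj', hgp, hup, hp0]
          left
          rw [offset_sub_offset a (by omega) (by omega), if_neg (by omega)]
          omega
        exact hp hadj (by rw [hg])
    · -- p = k - 1 : show q = n - 1
      right
      have hqe : q = k ∨ q = n - 1 := by
        by_contra hqc
        push_neg at hqc
        have hq1 : k + 1 ≤ q := by omega
        have hq2 : q ≤ n - 2 := by omega
        refine absurd hconn' (not_induces_connected' a (gi := n - 1) (gj := k - 1) (ea := 0)
          (eb := q) (by omega) (by omega) (by omega) (by omega) ?_ ?_ ?_ ?_ ?_ ?_)
        · refine m3 _ (by rw [hup]; exact hzne (n-1) q (by omega) (by omega) (by omega))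
            (Or.inl ?_)
          rw [hA, mem_arc_iff, offset_val a (by omega)]
          omega
        · have : a + ((k - 1 : ℕ) : Fin n) = g (c u') := by rw [hgp, hpk1]
          rw [this]
          exact m3 _ hcupne (Or.inr rfl)
        · have h0 : (a : Fin n) = a + ((0:ℕ) : Fin n) := by simp
          exact h0 ▸ m2 0 (by omega) (by omega)
        · rw [← hup]; exact m1
        · rw [if_neg (by omega), if_neg (by omega)]
          omega
        · rw [if_neg (by omega), if_neg (by omega)]
          omega
      rcases hqe with h | h
      · exfalso
        have hadj : (cycleGraph n).Adj u' (g (c u')) := by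
          rw [cycleGraph_adj', hgp, hup, hpk1]
          left
          rw [offset_sub_offset a (by omega) (by omega), if_pos (by omega)]
          omega
        exact hp hadj (by rw [hg])
      · exact ⟨by rw [hgp, hpk1], h⟩
  -- apply swaps
  have hknm : a + ((k : ℕ) : Fin n) ∉ Set.range g := by
    rw [hA, mem_arc_iff, offset_val a (by omega)]
    omega
  have hnm : a + ((n - 1 : ℕ) : Fin n) ∉ Set.range g := by
    rw [hA, mem_arc_iff, offset_val a (by omega)]
    omega
  have hc1 : c (a + ((k : ℕ) : Fin n)) = c a := by
    rcases hswap _ hknm with ⟨h1, _⟩ | ⟨_, h2⟩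
    · rw [← hg (c (a + ((k : ℕ) : Fin n))), h1]
    · rw [offset_val a (by omega)] at h2
      omega
  have hc2 : c (a + ((n - 1 : ℕ) : Fin n)) = c (a + ((k - 1 : ℕ) : Fin n)) := by
    rcases hswap _ hnm with ⟨_, h1⟩ | ⟨h2, _⟩
    · rw [offset_val a (by omega)] at h1
      omega
    · rw [← hg (c (a + ((n - 1 : ℕ) : Fin n))), h2]
  -- colours of a and a + (k-1) distinct
  have hmem0 : (a : Fin n) ∈ Set.range g := by
    have := hmemA 0 (by omega)
    simpa using this
  have hmemk1 : a + ((k - 1 : ℕ) : Fin n) ∈ Set.range g := hmemA (k-1) (by omega)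
  have hzne : ∀ t s : ℕ, t < n → s < n → t ≠ s → a + (t : Fin n) ≠ a + (s : Fin n) := by
    intro t s ht hs hts he
    exact hts (offset_inj ht hs he)
  have hcne : c a ≠ c (a + ((k - 1 : ℕ) : Fin n)) := by
    intro he
    have h1 := hgc _ hmem0
    have h2 := hgc _ hmemk1
    rw [he, h2] at h1
    have : (0 : ℕ) ≠ k - 1 := by omega
    refine hzne 0 (k-1) (by omega) (by omega) this ?_
    simpa using h1.symm
  -- the final committee
  set g3 := Function.update (Function.update g (c a) (a + ((k : ℕ) : Fin n)))
    (c (a + ((k - 1 : ℕ) : Fin n))) (a + ((n - 1 : ℕ) : Fin n)) with hg3def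
  have hrb3 : IsRainbow c g3 := by
    intro i
    by_cases h1 : i = c (a + ((k - 1 : ℕ) : Fin n))
    · rw [h1, hg3def, Function.update_self, hc2]
    · rw [hg3def, Function.update_of_ne h1]
      by_cases h2 : i = c a
      · rw [h2, Function.update_self, hc1]
      · rw [Function.update_of_ne h2, hg]
  have hconn3 := hcomp g3 hrb3
  -- membership in range g3
  have n1 : a + ((k : ℕ) : Fin n) ∈ Set.range g3 := by
    refine ⟨c a, ?_⟩
    rw [hg3def, Function.update_of_ne (fun h => hcne h), Function.update_self]
  have n2 : a + ((n - 1 : ℕ) : Fin n) ∈ Set.range g3 :=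
    ⟨c (a + ((k - 1 : ℕ) : Fin n)), by rw [hg3def, Function.update_self]⟩
  have m3' : ∀ z : Fin n, z ≠ a + ((k : ℕ) : Fin n) → z ≠ a + ((n - 1 : ℕ) : Fin n) →
      (z ∉ Set.range g ∨ z = a ∨ z = a + ((k - 1 : ℕ) : Fin n)) → z ∉ Set.range g3 := by
    rintro z hz1 hz2 hz3 ⟨i, hi⟩
    by_cases h1 : i = c (a + ((k - 1 : ℕ) : Fin n))
    · rw [h1, hg3def, Function.update_self] at hi
      exact hz2 hi.symm
    · rw [hg3def, Function.update_of_ne h1] at hi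
      by_cases h2 : i = c a
      · rw [h2, Function.update_self] at hi
        exact hz1 hi.symm
      · rw [Function.update_of_ne h2] at hi
        rcases hz3 with h | h | h
        · exact h ⟨i, hi⟩
        · exact h2 (by rw [← hg i, hi, h])
        · exact h1 (by rw [← hg i, hi, h])
  have gap0 : (a : Fin n) ∉ Set.range g3 := by
    refine m3' a ?_ ?_ (Or.inr (Or.inl rfl))
    · conv_lhs => rw [show (a : Fin n) = a + ((0:ℕ) : Fin n) by simp]
      exact hzne 0 k (by omega) (by omega) (by omega)
    · conv_lhs => rw [show (a : Fin n) = a + ((0:ℕ) : Fin n) by simp]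
      exact hzne 0 (n-1) (by omega) (by omega) (by omega)
  have gapk1 : a + ((k - 1 : ℕ) : Fin n) ∉ Set.range g3 := by
    refine m3' _ (hzne (k-1) k (by omega) (by omega) (by omega))
      (hzne (k-1) (n-1) (by omega) (by omega) (by omega)) (Or.inr (Or.inr rfl))
  rcases Nat.lt_or_ge k 3 with hk3 | hk3
  · -- k = 2 case
    have hk2' : k = 2 := by omega
    have gap3 : a + ((3 : ℕ) : Fin n) ∉ Set.range g3 := by
      refine m3' _ (hzne 3 k (by omega) (by omega) (by omega))
        (hzne 3 (n-1) (by omega) (by omega) (by omega)) (Or.inl ?_)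
      rw [hA, mem_arc_iff, offset_val a (by omega)]
      omega
    refine absurd hconn3 (not_induces_connected' a (gi := 0) (gj := 3) (ea := k)
      (eb := n - 1) (by omega) (by omega) (by omega) (by omega) ?_ gap3 n1 n2 ?_ ?_)
    · simpa using gap0
    · rw [if_pos (by omega), if_pos (by omega)]
      omega
    · rw [if_pos (by omega), if_pos (by omega)]
      omega
  · -- k ≥ 3 case
    have n3 : a + ((1 : ℕ) : Fin n) ∈ Set.range g3 := by
      have hmem1 : a + ((1 : ℕ) : Fin n) ∈ Set.range g := hmemA 1 (by omega)
      refine ⟨c (a + ((1 : ℕ) : Fin n)), ?_⟩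
      have hne1 : c (a + ((1 : ℕ) : Fin n)) ≠ c (a + ((k - 1 : ℕ) : Fin n)) := by
        intro he
        have e1 := hgc _ hmem1
        have e2 := hgc _ hmemk1
        rw [he, e2] at e1
        exact hzne (k-1) 1 (by omega) (by omega) (by omega) e1
      have hne2 : c (a + ((1 : ℕ) : Fin n)) ≠ c a := by
        intro he
        have e1 := hgc _ hmem1
        have e2 := hgc _ hmem0
        rw [he, e2] at e1
        refine hzne 0 1 (by omega) (by omega) (by omega) ?_
        rw [show a + ((0:ℕ):Fin n) = a by simp]
        exact e1
      rw [hg3def, Function.update_of_ne hne1, Function.update_of_ne hne2]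
      exact hgc _ hmem1
    refine absurd hconn3 (not_induces_connected' a (gi := k - 1) (gj := 0) (ea := k)
      (eb := 1) (by omega) (by omega) (by omega) (by omega) gapk1 ?_ n1 n3 ?_ ?_)
    · simpa using gap0
    · rw [if_pos (by omega), if_neg (by omega)]
      omega
    · rw [if_neg (by omega), if_neg (by omega)]
      omega

end Toolkit

/-- For `n ≥ 5`, the Connected-compelling chromatic number of the cycle `C_n` is `n - 1`. -/
theorem connCompellingChromNum_cycleGraph (n : ℕ) (hn : 5 ≤ n) :
    connCompellingChromNum (cycleGraph n) = n - 1 := by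
  haveI : NeZero n := ⟨by omega⟩
  unfold connCompellingChromNum compellingChromNum
  have hmem : (n - 1) ∈ {k : ℕ | ∃ c : Fin n → Fin k, ProperColoring (cycleGraph n) c ∧
      Function.Surjective c ∧ Compels c (InducesConnected (cycleGraph n))} := upper_mem hn rfl
  apply le_antisymm
  · exact Nat.sInf_le hmem
  · refine le_csInf ⟨_, hmem⟩ ?_
    rintro b ⟨cb, hpb, hsb, hcompb⟩
    exact lower_bound hn cb hpb hsb hcompb
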